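/- arXiv:2402.00946 — 4 statements merged into one kernel-verified Lean document; each statement's English description precedes it below -/
import Mathlib

section
/- Let S be a union of m pairwise disjoint cells of measure h^2, and suppose a family V of functions satisfies the inverse stability property: ‖v − ṽ‖_{L^1(S)} ≤ C h^2 Σ_{T∈S} |a_T(v) − a_T(ṽ)| for all v, ṽ ∈ V. If ũ ∈ V minimizes the ℓ^2 norm of the average discrepancy, i.e., Σ_{T∈S}|a_T(ũ)−a_T(u)|^2 ≤ Σ_{T∈S}|a_T(v)−a_T(u)|^2 for all v ∈ V, then ‖u − ũ‖_{L^1(S)} ≤ (1 + 2C√m) · inf_{v∈V} ‖u − v‖_{L^1(S)}. -/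
open MeasureTheory

/-- The cell average `a_T(v) = (1/h²) ∫_T v`. -/
noncomputable def cellAvg (h : ℝ) (T : Set (ℝ × ℝ)) (v : ℝ × ℝ → ℝ) : ℝ :=
  (1 / h ^ 2) * ∫ x in T, v x

/-- If a family `V` satisfies the inverse stability property on a stencil `S` of `m` cells
of measure `h²`, and `utilde ∈ V` minimizes the `ℓ²` norm of the average discrepancy with `u`,
then `‖u − utilde‖_{L¹(S)} ≤ (1 + 2C√m) · inf_{v∈V} ‖u − v‖_{L¹(S)}`. -/
theorem stmt2 (h : ℝ) (hh : 0 < h) (S : Finset (Set (ℝ × ℝ)))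
    (hmeas : ∀ T ∈ S, MeasurableSet T)
    (hvol : ∀ T ∈ S, volume T = ENNReal.ofReal (h ^ 2))
    (hdisj : (S : Set (Set (ℝ × ℝ))).Pairwise Disjoint)
    (C : ℝ) (hC : 0 < C)
    (V : Set ((ℝ × ℝ) → ℝ)) (hV : V.Nonempty)
    (u : (ℝ × ℝ) → ℝ) (hu : IntegrableOn u (⋃ T ∈ S, T))
    (hVint : ∀ v ∈ V, IntegrableOn v (⋃ T ∈ S, T))
    (hstab : ∀ v ∈ V, ∀ w ∈ V,
      ∫ x in (⋃ T ∈ S, T), |v x - w x| ≤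
        C * h ^ 2 * ∑ T ∈ S, |cellAvg h T v - cellAvg h T w|)
    (utilde : (ℝ × ℝ) → ℝ) (hutilde : utilde ∈ V)
    (hmin : ∀ v ∈ V, ∑ T ∈ S, |cellAvg h T utilde - cellAvg h T u| ^ 2 ≤
      ∑ T ∈ S, |cellAvg h T v - cellAvg h T u| ^ 2) :
    ∫ x in (⋃ T ∈ S, T), |u x - utilde x| ≤
      (1 + 2 * C * Real.sqrt S.card) *
        ⨅ v : V, ∫ x in (⋃ T ∈ S, T), |u x - (v : (ℝ × ℝ) → ℝ) x| := by
  haveI : Nonempty V := hV.to_subtype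
  set U : Set (ℝ × ℝ) := ⋃ T ∈ S, T with hU
  have hsub : ∀ T ∈ S, T ⊆ U := fun T hT x hx => Set.mem_biUnion hT hx
  have h2 : (0:ℝ) < h ^ 2 := by positivity
  have hsq : (0:ℝ) ≤ Real.sqrt S.card := Real.sqrt_nonneg _
  set K : ℝ := 1 + 2 * C * Real.sqrt S.card with hK
  have hKpos : 0 < K := by positivity
  -- key estimate for each `v ∈ V`
  have key : ∀ v ∈ V, ∫ x in U, |u x - utilde x| ≤ K * ∫ x in U, |u x - v x| := by
    intro v hv
    have hiv : IntegrableOn v U := hVint v hv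
    have hiu : IntegrableOn utilde U := hVint utilde hutilde
    rcases S.eq_empty_or_nonempty with hS | hS
    · have hUe : U = ∅ := by simp [hU, hS]
      have h1 : ∫ x in U, |u x - utilde x| = 0 := by rw [hUe]; simp
      have h0 : 0 ≤ ∫ x in U, |u x - v x| := integral_nonneg fun x => abs_nonneg _
      rw [h1]
      positivity
    have hm1 : (1:ℝ) ≤ Real.sqrt S.card := by
      have : (1:ℝ) ≤ (S.card : ℝ) := by
        exact_mod_cast Nat.one_le_iff_ne_zero.2 (Finset.card_ne_zero_of_mem hS.choose_spec)
      calc (1:ℝ) = Real.sqrt 1 := by simp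
        _ ≤ Real.sqrt S.card := Real.sqrt_le_sqrt this
    set A : Set (ℝ×ℝ) → ℝ := fun T => |cellAvg h T v - cellAvg h T u| with hA
    set B : Set (ℝ×ℝ) → ℝ := fun T => |cellAvg h T utilde - cellAvg h T u| with hB
    have hAnn : ∀ T ∈ S, 0 ≤ A T := fun T _ => abs_nonneg _
    have hBnn : ∀ T ∈ S, 0 ≤ B T := fun T _ => abs_nonneg _
    have hAsum : 0 ≤ ∑ T ∈ S, A T := Finset.sum_nonneg hAnn
    -- Step D : h² * Σ A ≤ ∫ |u - v|
    have stepD : h ^ 2 * ∑ T ∈ S, A T ≤ ∫ x in U, |u x - v x| := by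
      have heq : ∫ x in U, |u x - v x| = ∑ T ∈ S, ∫ x in T, |u x - v x| := by
        apply integral_biUnion_finset S hmeas hdisj
        intro T hT
        exact (IntegrableOn.mono_set (hu.sub hiv) (hsub T hT)).abs
      rw [heq, Finset.mul_sum]
      apply Finset.sum_le_sum
      intro T hT
      have hiuT : IntegrableOn u T := hu.mono_set (hsub T hT)
      have hivT : IntegrableOn v T := hiv.mono_set (hsub T hT)
      have hc : cellAvg h T v - cellAvg h T u = (1 / h ^ 2) * ∫ x in T, (v x - u x) := by
        rw [cellAvg, cellAvg, integral_sub hivT hiuT]; ring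
      have : h ^ 2 * A T = |∫ x in T, (v x - u x)| := by
        rw [hA]; simp only [hc, abs_mul, abs_div, abs_one, abs_of_pos h2]
        field_simp
      rw [this]
      have habs : |∫ x in T, (v x - u x)| ≤ ∫ x in T, |v x - u x| := by
        have := norm_integral_le_integral_norm (μ := volume.restrict T)
          (f := fun x => v x - u x)
        simpa [Real.norm_eq_abs] using this
      calc |∫ x in T, (v x - u x)| ≤ ∫ x in T, |v x - u x| := habs
        _ = ∫ x in T, |u x - v x| := by simp_rw [abs_sub_comm]
    -- Step C : Σ |a v - a ũ| ≤ 2√m Σ A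
    have stepC : ∑ T ∈ S, |cellAvg h T v - cellAvg h T utilde| ≤
        2 * Real.sqrt S.card * ∑ T ∈ S, A T := by
      have tri : ∑ T ∈ S, |cellAvg h T v - cellAvg h T utilde| ≤
          ∑ T ∈ S, A T + ∑ T ∈ S, B T := by
        rw [← Finset.sum_add_distrib]
        apply Finset.sum_le_sum
        intro T hT
        calc |cellAvg h T v - cellAvg h T utilde|
            = |(cellAvg h T v - cellAvg h T u) - (cellAvg h T utilde - cellAvg h T u)| := by
              ring_nf
          _ ≤ A T + B T := abs_sub _ _
      have hB2 : ∑ T ∈ S, B T ≤ Real.sqrt S.card * ∑ T ∈ S, A T := by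
        apply le_of_sq_le_sq _ (by positivity)
        rw [mul_pow, Real.sq_sqrt (by positivity)]
        calc (∑ T ∈ S, B T) ^ 2 ≤ (S.card : ℝ) * ∑ T ∈ S, B T ^ 2 :=
              sq_sum_le_card_mul_sum_sq
          _ ≤ (S.card : ℝ) * ∑ T ∈ S, A T ^ 2 :=
              mul_le_mul_of_nonneg_left (hmin v hv) (by positivity)
          _ ≤ (S.card : ℝ) * (∑ T ∈ S, A T) ^ 2 :=
              mul_le_mul_of_nonneg_left (Finset.sum_sq_le_sq_sum_of_nonneg hAnn)
                (by positivity)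
      have hA1 : ∑ T ∈ S, A T ≤ Real.sqrt S.card * ∑ T ∈ S, A T := by
        nlinarith
      calc ∑ T ∈ S, |cellAvg h T v - cellAvg h T utilde| ≤ ∑ T ∈ S, A T + ∑ T ∈ S, B T := tri
        _ ≤ Real.sqrt S.card * ∑ T ∈ S, A T + Real.sqrt S.card * ∑ T ∈ S, A T := by
            gcongr
        _ = 2 * Real.sqrt S.card * ∑ T ∈ S, A T := by ring
    -- combine
    have triInt : ∫ x in U, |u x - utilde x| ≤
        (∫ x in U, |u x - v x|) + ∫ x in U, |v x - utilde x| := by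
      have i1 : IntegrableOn (fun x => |u x - v x|) U := (hu.sub hiv).abs
      have i2 : IntegrableOn (fun x => |v x - utilde x|) U := (hiv.sub hiu).abs
      have i0 : IntegrableOn (fun x => |u x - utilde x|) U := (hu.sub hiu).abs
      rw [← integral_add i1 i2]
      apply integral_mono i0 (i1.add i2)
      intro x
      calc |u x - utilde x| = |(u x - v x) + (v x - utilde x)| := by ring_nf
        _ ≤ |u x - v x| + |v x - utilde x| := abs_add_le _ _
    have hstab' := hstab v hv utilde hutilde
    calc ∫ x in U, |u x - utilde x|
        ≤ (∫ x in U, |u x - v x|) + ∫ x in U, |v x - utilde x| := triInt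
      _ ≤ (∫ x in U, |u x - v x|) +
          C * h ^ 2 * ∑ T ∈ S, |cellAvg h T v - cellAvg h T utilde| := by linarith
      _ ≤ (∫ x in U, |u x - v x|) +
          C * h ^ 2 * (2 * Real.sqrt S.card * ∑ T ∈ S, A T) := by
          have : (0:ℝ) ≤ C * h ^ 2 := by positivity
          nlinarith
      _ = (∫ x in U, |u x - v x|) +
          2 * C * Real.sqrt S.card * (h ^ 2 * ∑ T ∈ S, A T) := by ring
      _ ≤ (∫ x in U, |u x - v x|) +
          2 * C * Real.sqrt S.card * ∫ x in U, |u x - v x| := by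
          have : (0:ℝ) ≤ 2 * C * Real.sqrt S.card := by positivity
          nlinarith
      _ = K * ∫ x in U, |u x - v x| := by rw [hK]; ring
  -- conclude via the infimum
  rw [← div_le_iff₀' hKpos]
  apply le_ciInf
  intro v
  rw [div_le_iff₀' hKpos]
  exact key v v.2
end

section
/- Given n+1 adjacent intervals I_i = [x_0 + ih, x_0 + (i+1)h], i = 0,…,n, with h > 0, and any prescribed values c_0,…,c_n ∈ ℝ, there exists a unique polynomial p of degree at most n such that (1/h)∫_{I_i} p(x) dx = c_i for all i. In other words, the linear map from polynomials of degree ≤ n to ℝ^{n+1} given by the averages over the n+1 intervals is a linear isomorphism. -/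
open Polynomial intervalIntegral

/-- Every real polynomial of `natDegree ≤ n` has an antiderivative of `natDegree ≤ n+1`. -/
lemma my_antideriv (n : ℕ) (p : ℝ[X]) (hp : p.natDegree ≤ n) :
    ∃ P : ℝ[X], P.natDegree ≤ n + 1 ∧ P.derivative = p := by
  refine ⟨∑ i ∈ Finset.range (n + 1), C (p.coeff i / (i + 1)) * X ^ (i + 1), ?_, ?_⟩
  · refine (Polynomial.natDegree_sum_le _ _).trans ?_
    simp only [Finset.fold_max_le, Function.comp]
    refine ⟨Nat.zero_le _, fun i hi => ?_⟩
    refine (natDegree_C_mul_le _ _).trans ?_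
    simp [Finset.mem_range.mp hi, Nat.succ_le_succ (Nat.lt_succ_iff.mp (Finset.mem_range.mp hi))]
  · rw [derivative_sum]
    have : ∀ i ∈ Finset.range (n + 1),
        derivative (C (p.coeff i / (i + 1)) * X ^ (i + 1)) = C (p.coeff i) * X ^ i := by
      intro i _
      rw [derivative_C_mul, derivative_X_pow, Nat.add_sub_cancel, ← mul_assoc, ← C_mul]
      congr 2
      push_cast
      field_simp
    rw [Finset.sum_congr rfl this]
    conv_rhs => rw [p.as_sum_range' (n+1) (Nat.lt_succ_of_le hp)]
    simp [C_mul_X_pow_eq_monomial]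

/-- Integral of a polynomial via an antiderivative. -/
lemma my_integral_eq (P : ℝ[X]) (a b : ℝ) :
    ∫ x in a..b, (P.derivative).eval x = P.eval b - P.eval a := by
  refine intervalIntegral.integral_eq_sub_of_hasDerivAt (fun x _ => P.hasDerivAt x) ?_
  exact (P.derivative.continuous).intervalIntegrable _ _

/-- Core injectivity: a polynomial of degree ≤ n with all n+1 interval averages zero is zero. -/
lemma my_core (n : ℕ) (x0 h : ℝ) (hh : 0 < h) (p : ℝ[X]) (hp : p.natDegree ≤ n)
    (hz : ∀ i : Fin (n + 1),
      (∫ x in (x0 + (i.1 : ℝ) * h)..(x0 + ((i.1 : ℝ) + 1) * h), p.eval x) = 0) :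
    p = 0 := by
  obtain ⟨P, hPdeg, hPd⟩ := my_antideriv n p hp
  -- P takes the same value at all points x0 + i*h, i = 0..n+1
  have key : ∀ i : ℕ, i ≤ n + 1 → P.eval (x0 + i * h) = P.eval x0 := by
    intro i
    induction i with
    | zero => simp
    | succ k ih =>
      intro hk
      have hk' : k ≤ n := Nat.lt_succ_iff.mp hk
      have := hz ⟨k, Nat.lt_succ_of_le hk'⟩
      rw [← hPd, my_integral_eq] at this
      have hsub : P.eval (x0 + (↑k + 1) * h) = P.eval (x0 + ↑k * h) := by linarith
      push_cast
      rw [hsub, ih (Nat.le_succ_of_le hk')]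
  set Q : ℝ[X] := P - C (P.eval x0) with hQ
  have hQz : Q = 0 := by
    refine Polynomial.eq_zero_of_natDegree_lt_card_of_eval_eq_zero Q
      (f := fun i : Fin (n + 2) => x0 + (i.1 : ℝ) * h) ?_ ?_ ?_
    · intro i j hij
      have : (i.1 : ℝ) * h = (j.1 : ℝ) * h := by dsimp at hij; linarith
      have : (i.1 : ℝ) = (j.1 : ℝ) := mul_right_cancel₀ hh.ne' this
      exact Fin.ext (by exact_mod_cast this)
    · intro i
      simp only [hQ, eval_sub, eval_C]
      rw [key i.1 (Nat.lt_succ_iff.mp i.2)]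
      ring
    · refine lt_of_le_of_lt ?_ (by simp : n + 1 < Fintype.card (Fin (n + 2)))
      exact (Polynomial.natDegree_sub_le _ _).trans (by simp [hPdeg])
  have : P = C (P.eval x0) := by rwa [sub_eq_zero] at hQz
  rw [← hPd, this, derivative_C]

/-- Existence and uniqueness of the average interpolant: given `n+1` adjacent intervals
`[x₀ + ih, x₀ + (i+1)h]` with `h > 0` and prescribed values `c₀, …, c_n`, there is a unique
polynomial `p` of degree at most `n` with `(1/h)∫_{I_i} p = c_i` for all `i`. -/
theorem stmt7 (n : ℕ) (x0 h : ℝ) (hh : 0 < h) (c : Fin (n + 1) → ℝ) :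
    ∃! p : Polynomial ℝ, p.natDegree ≤ n ∧
      ∀ i : Fin (n + 1),
        (1 / h) * ∫ x in (x0 + (i.1 : ℝ) * h)..(x0 + ((i.1 : ℝ) + 1) * h), p.eval x = c i := by
  have hh0 : h ≠ 0 := hh.ne'
  -- the averaging linear map on degreeLT
  set L : Polynomial.degreeLT ℝ (n + 1) →ₗ[ℝ] (Fin (n + 1) → ℝ) :=
    { toFun := fun p i => (1 / h) * ∫ x in (x0 + (i.1 : ℝ) * h)..(x0 + ((i.1 : ℝ) + 1) * h),
        (p : ℝ[X]).eval x
      map_add' := by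
        intro p q
        funext i
        have h1 := ((p : ℝ[X]).continuous).intervalIntegrable (μ := MeasureTheory.volume)
          (x0 + (i.1 : ℝ) * h) (x0 + ((i.1 : ℝ) + 1) * h)
        have h2 := ((q : ℝ[X]).continuous).intervalIntegrable (μ := MeasureTheory.volume)
          (x0 + (i.1 : ℝ) * h) (x0 + ((i.1 : ℝ) + 1) * h)
        simp only [Submodule.coe_add, eval_add, Pi.add_apply]
        rw [intervalIntegral.integral_add h1 h2]
        ring
      map_smul' := by
        intro a p
        funext i
        simp only [Submodule.coe_smul, smul_eq_mul, RingHom.id_apply, Pi.smul_apply]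
        have : ∀ x : ℝ, ((a • (p : ℝ[X])).eval x) = a * (p : ℝ[X]).eval x := by
          intro x; simp
        simp_rw [this]
        rw [intervalIntegral.integral_const_mul]
        ring } with hL
  have hmemdeg : ∀ p : ℝ[X], p ∈ Polynomial.degreeLT ℝ (n + 1) → p.natDegree ≤ n := by
    intro p hp
    rcases eq_or_ne p 0 with rfl | hp0
    · simp
    · have := Polynomial.mem_degreeLT.mp hp
      exact Nat.lt_succ_iff.mp ((Polynomial.natDegree_lt_iff_degree_lt hp0).mpr this)
  have hLinj : Function.Injective L := by
    rw [← LinearMap.ker_eq_bot, LinearMap.ker_eq_bot']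
    intro p hp
    have hz : ∀ i : Fin (n + 1),
        (∫ x in (x0 + (i.1 : ℝ) * h)..(x0 + ((i.1 : ℝ) + 1) * h), (p : ℝ[X]).eval x) = 0 := by
      intro i
      have := congrFun hp i
      simp only [hL, LinearMap.coe_mk, AddHom.coe_mk, Pi.zero_apply] at this
      have h1h : (1 : ℝ) / h ≠ 0 := by positivity
      field_simp at this
      rw [mul_zero] at this
      convert this using 2 <;> ring
    have : (p : ℝ[X]) = 0 := my_core n x0 h hh _ (hmemdeg _ p.2) hz
    exact Subtype.ext this
  -- transfer to endomorphism of Fin (n+1) → ℝ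
  set E := Polynomial.degreeLTEquiv ℝ (n + 1)
  set M : (Fin (n + 1) → ℝ) →ₗ[ℝ] (Fin (n + 1) → ℝ) := L ∘ₗ (E.symm : _ →ₗ[ℝ] _)
  have hMinj : Function.Injective M := hLinj.comp E.symm.injective
  have hMsurj : Function.Surjective M := (LinearMap.injective_iff_surjective).mp hMinj
  obtain ⟨v, hv⟩ := hMsurj c
  set p : Polynomial.degreeLT ℝ (n + 1) := E.symm v
  refine ⟨(p : ℝ[X]), ⟨hmemdeg _ p.2, fun i => congrFun hv i⟩, ?_⟩
  rintro q ⟨hqdeg, hq⟩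
  -- uniqueness via the core lemma applied to q - p
  have hpdeg : (p : ℝ[X]).natDegree ≤ n := hmemdeg _ p.2
  have hp' : ∀ i : Fin (n + 1),
      (1 / h) * ∫ x in (x0 + (i.1 : ℝ) * h)..(x0 + ((i.1 : ℝ) + 1) * h), (p : ℝ[X]).eval x = c i :=
    fun i => congrFun hv i
  have hdiff : (q - (p : ℝ[X])) = 0 := by
    refine my_core n x0 h hh _ ((Polynomial.natDegree_sub_le _ _).trans (by simp [hqdeg, hpdeg])) ?_
    intro i
    have h1 := (q.continuous).intervalIntegrable (μ := MeasureTheory.volume)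
      (x0 + (i.1 : ℝ) * h) (x0 + ((i.1 : ℝ) + 1) * h)
    have h2 := (((p : ℝ[X])).continuous).intervalIntegrable (μ := MeasureTheory.volume)
      (x0 + (i.1 : ℝ) * h) (x0 + ((i.1 : ℝ) + 1) * h)
    have : ∫ x in (x0 + (i.1 : ℝ) * h)..(x0 + ((i.1 : ℝ) + 1) * h), (q - (p:ℝ[X])).eval x
        = (∫ x in (x0 + (i.1 : ℝ) * h)..(x0 + ((i.1 : ℝ) + 1) * h), q.eval x)
          - ∫ x in (x0 + (i.1 : ℝ) * h)..(x0 + ((i.1 : ℝ) + 1) * h), (p:ℝ[X]).eval x := by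
      simp_rw [eval_sub]
      exact intervalIntegral.integral_sub h1 h2
    rw [this]
    have e1 := hq i
    have e2 := hp' i
    have h1h : (1 : ℝ) / h ≠ 0 := by positivity
    field_simp at e1 e2 ⊢
    linarith
  rw [sub_eq_zero] at hdiff
  exact hdiff
end

section
/- Let v : [a, b] → ℝ be integrable over n+1 adjacent equal subintervals of [a,b], and let p be the unique polynomial of degree ≤ n matching the averages of v on these subintervals. Then p equals the derivative of the Lagrange polynomial of degree ≤ n+1 that interpolates the primitive V(x) = ∫_a^x v(t)dt at the n+2 interval endpoints. -/
open intervalIntegral Polynomial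

noncomputable def antideriv (p : Polynomial ℝ) : Polynomial ℝ :=
  p.sum fun i c => Polynomial.C (c / (i + 1)) * Polynomial.X ^ (i + 1)

lemma derivative_antideriv (p : Polynomial ℝ) : (antideriv p).derivative = p := by
  rw [antideriv, Polynomial.sum, map_sum]
  conv_rhs => rw [← Polynomial.sum_C_mul_X_pow_eq p, Polynomial.sum]
  refine Finset.sum_congr rfl fun i _ => ?_
  rw [Polynomial.derivative_C_mul, Polynomial.derivative_X_pow]
  push_cast
  rw [← mul_assoc, ← Polynomial.C_mul, div_mul_cancel₀]
  positivity

lemma natDegree_antideriv (p : Polynomial ℝ) : (antideriv p).natDegree ≤ p.natDegree + 1 := by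
  rw [antideriv, Polynomial.sum]
  refine Polynomial.natDegree_sum_le_of_forall_le _ _ fun i hi => ?_
  refine (Polynomial.natDegree_C_mul_le _ _).trans ?_
  simpa using Nat.succ_le_succ (Polynomial.le_natDegree_of_mem_supp i hi)

lemma integral_poly (r : Polynomial ℝ) (c d : ℝ) :
    ∫ x in c..d, r.eval x = (antideriv r).eval d - (antideriv r).eval c := by
  refine intervalIntegral.integral_eq_sub_of_hasDerivAt
    (f := fun x => (antideriv r).eval x) (fun x _ => ?_)
    (r.continuous.intervalIntegrable c d)
  have := (antideriv r).hasDerivAt x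
  rwa [derivative_antideriv] at this

/-- The average interpolant of `v` on `n+1` equal subintervals of `[a,b]` is the derivative of
the Lagrange interpolant of degree `≤ n+1` of the primitive `V(x) = ∫_a^x v` at the `n+2`
subinterval endpoints. -/
theorem stmt8 (n : ℕ) (a b : ℝ) (hab : a < b) (v : ℝ → ℝ)
    (hv : IntervalIntegrable v MeasureTheory.volume a b)
    (V : ℝ → ℝ) (hV : ∀ x, V x = ∫ t in a..x, v t)
    (q : Polynomial ℝ) (hqdeg : q.natDegree ≤ n + 1)
    (hq : ∀ i : Fin (n + 2),
      q.eval (a + (i.1 : ℝ) * ((b - a) / (n + 1))) = V (a + (i.1 : ℝ) * ((b - a) / (n + 1))))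
    (p : Polynomial ℝ) (hpdeg : p.natDegree ≤ n)
    (hp : ∀ i : Fin (n + 1),
      ∫ x in (a + (i.1 : ℝ) * ((b - a) / (n + 1)))..(a + ((i.1 : ℝ) + 1) * ((b - a) / (n + 1))),
          p.eval x
        = ∫ x in (a + (i.1 : ℝ) * ((b - a) / (n + 1)))..(a + ((i.1 : ℝ) + 1) * ((b - a) / (n + 1))),
            v x) :
    p = Polynomial.derivative q := by
  set h : ℝ := (b - a) / (n + 1) with hh
  have hn1 : (0:ℝ) < (n:ℝ) + 1 := by positivity
  have hhpos : 0 < h := div_pos (by linarith) hn1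
  set f : ℕ → ℝ := fun i => a + i * h with hf
  -- endpoints lie in [a,b]
  have hmem : ∀ i : ℕ, i ≤ n + 1 → a ≤ f i ∧ f i ≤ b := by
    intro i hi
    constructor
    · have : (0:ℝ) ≤ i * h := by positivity
      simp [hf]; linarith
    · have : (i:ℝ) * h ≤ ((n:ℝ)+1) * h := by
        apply mul_le_mul_of_nonneg_right _ hhpos.le
        exact_mod_cast hi
      have hb : ((n:ℝ)+1) * h = b - a := by
        rw [hh]
        field_simp
      simp [hf]; linarith
  -- integral of v over subintervals
  have hvint : ∀ i : ℕ, i ≤ n + 1 → IntervalIntegrable v MeasureTheory.volume a (f i) := by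
    intro i hi
    refine hv.mono_set ?_
    rw [Set.uIcc_of_le (hmem i hi).1, Set.uIcc_of_le hab.le]
    exact Set.Icc_subset_Icc le_rfl (hmem i hi).2
  have hVdiff : ∀ i : Fin (n+1), (∫ x in f i.1..f (i.1+1), v x) = V (f (i.1+1)) - V (f i.1) := by
    intro i
    rw [hV, hV]
    exact (intervalIntegral.integral_interval_sub_left (hvint (i.1+1) (by omega))
      (hvint i.1 (by omega))).symm
  -- key: r := p - derivative q has zero integral over each subinterval
  set r : Polynomial ℝ := p - Polynomial.derivative q with hr
  set R : Polynomial ℝ := antideriv r with hR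
  have hqd : ∀ c d : ℝ, ∫ x in c..d, (Polynomial.derivative q).eval x = q.eval d - q.eval c := by
    intro c d
    refine intervalIntegral.integral_eq_sub_of_hasDerivAt (fun x _ => q.hasDerivAt x)
      ((Polynomial.derivative q).continuous.intervalIntegrable c d)
  have hRstep : ∀ i : Fin (n+1), R.eval (f (i.1+1)) = R.eval (f i.1) := by
    intro i
    have h1 : ∫ x in f i.1..f (i.1+1), r.eval x = 0 := by
      have : (fun x => r.eval x) = fun x => p.eval x - (Polynomial.derivative q).eval x := by
        funext x; simp [hr]
      rw [this, intervalIntegral.integral_sub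
        (p.continuous.intervalIntegrable _ _)
        ((Polynomial.derivative q).continuous.intervalIntegrable _ _)]
      have hpi := hp i
      have hfi : f (i.1+1) = a + ((i.1:ℝ)+1) * h := by push_cast [hf]; ring
      rw [hfi]
      rw [show f i.1 = a + (i.1:ℝ) * h from rfl]
      rw [hpi, hqd, ← hfi]
      rw [show (a + (i.1:ℝ) * h) = f i.1 from rfl] at hpi ⊢
      have := hVdiff i
      rw [show ∫ x in f i.1..f (i.1+1), v x = V (f (i.1+1)) - V (f i.1) from this]
      have e1 := hq ⟨i.1, by omega⟩
      have e2 := hq ⟨i.1+1, by omega⟩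
      simp only [hf] at e1 e2 ⊢
      push_cast at e1 e2 ⊢
      rw [e1, e2]
      ring
    have h2 := integral_poly r (f i.1) (f (i.1+1))
    rw [h1] at h2
    linarith [h2]
  have hRconst : ∀ i : ℕ, i ≤ n + 1 → R.eval (f i) = R.eval (f 0) := by
    intro i hi
    induction i with
    | zero => rfl
    | succ k ih =>
      rw [hRstep ⟨k, by omega⟩, ih (by omega)]
  -- R - C (R.eval (f 0)) has n+2 distinct roots and degree ≤ n+1, so it's zero
  have hinj : Function.Injective (fun i : Fin (n+2) => f i.1) := by
    intro i j hij
    simp only [hf] at hij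
    have h1 : (i.1:ℝ) * h = j.1 * h := by linarith
    have h2 : (i.1:ℝ) = j.1 := mul_right_cancel₀ hhpos.ne' h1
    exact Fin.ext (by exact_mod_cast h2)
  have hzero : R - Polynomial.C (R.eval (f 0)) = 0 := by
    refine Polynomial.eq_zero_of_natDegree_lt_card_of_eval_eq_zero _ hinj (fun i => ?_) ?_
    · simp [hRconst i.1 (by omega)]
    · rw [Fintype.card_fin]
      calc (R - Polynomial.C (R.eval (f 0))).natDegree
          ≤ max R.natDegree (Polynomial.C (R.eval (f 0))).natDegree :=
            Polynomial.natDegree_sub_le _ _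
        _ ≤ n + 1 := by
            apply max_le
            · exact (natDegree_antideriv r).trans (by
                have : r.natDegree ≤ n := by
                  refine (Polynomial.natDegree_sub_le _ _).trans (max_le hpdeg ?_)
                  exact (Polynomial.natDegree_derivative_le q).trans (by omega)
                omega)
            · simp
        _ < n + 2 := by omega
  have hRder : Polynomial.derivative R = r := derivative_antideriv r
  have : r = 0 := by
    have hRC : R = Polynomial.C (R.eval (f 0)) := by linear_combination (norm := ring_nf) hzero
    rw [← hRder, hRC]
    simp
  have := sub_eq_zero.mp this
  exact this
end

section
/- Let Ω ⊆ ℝ^2 be such that near a cell T of side h the membership in Ω is characterized by y ≤ ψ(x) with ψ ∈ C^s([x_T − δ, x_T + δ]), s > 1, ‖ψ‖_{C^s} ≤ M, where δ = C_0 h, and suppose the recovered function is ũ_T = χ_{{y ≤ p_T(x)}} where p_T is the degree-2k average interpolant of ψ on 2k+1 columns of width h. Then ‖χ_Ω − ũ_T‖_{L^1(T)} ≤ C h^{r+1} with r = min{s, 2k+1} and C depending only on M, k. -/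
open MeasureTheory

section AEROS
open Set Polynomial

theorem iDW_inter {f : ℝ → ℝ} {s u : Set ℝ} {x : ℝ} {n : ℕ} (hu : u ∈ nhds x) :
    iteratedDerivWithin n f (s ∩ u) x = iteratedDerivWithin n f s x := by
  simp only [iteratedDerivWithin_eq_iteratedFDerivWithin, iteratedFDerivWithin_inter hu]

theorem taylor_lagrange_big {a b : ℝ} (hab : a < b) {f : ℝ → ℝ} {n m : ℕ}
    (hf : ContDiffOn ℝ n f (Set.Icc a b)) (hm : m < n) :
    ∀ x ∈ Set.Icc a b, ∃ x' ∈ Set.Icc a b,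
      f x - taylorWithinEval f m (Set.Icc a b) a x =
        iteratedDerivWithin (m + 1) f (Set.Icc a b) x' * (x - a) ^ (m + 1)
          / ((m + 1).factorial : ℝ) := by
  intro x hx
  rcases eq_or_lt_of_le hx.1 with rfl | hax
  · exact ⟨a, ⟨le_refl a, hab.le⟩, by simp [taylorWithinEval_self]⟩
  have hsub : Set.Icc a x ⊆ Set.Icc a b := Set.Icc_subset_Icc_right hx.2
  have hfx : ContDiffOn ℝ n f (Set.Icc a x) := hf.mono hsub
  have hf1 : ContDiffOn ℝ m f (Set.Icc a x) := hfx.of_le (by exact_mod_cast hm.le)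
  have hf' : DifferentiableOn ℝ (iteratedDerivWithin m f (Set.Icc a x)) (Set.Ioo a x) :=
    (hfx.differentiableOn_iteratedDerivWithin (by exact_mod_cast hm) (uniqueDiffOn_Icc hax)).mono
      Set.Ioo_subset_Icc_self
  obtain ⟨x', hx', hEq⟩ := taylor_mean_remainder_lagrange hax.ne
    (by rwa [Set.uIcc_of_le hax.le]) (by rwa [Set.uIcc_of_le hax.le, Set.uIoo_of_le hax.le])
  simp only [Set.uIcc_of_le hax.le, Set.uIoo_of_le hax.le] at hx' hEq
  refine ⟨x', hsub (Set.Ioo_subset_Icc_self hx'), ?_⟩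
  have h1 : iteratedDerivWithin (m + 1) f (Set.Icc a x) x' =
      iteratedDerivWithin (m + 1) f (Set.Icc a b) x' := by
    have hu : Set.Ioo a x ∈ nhds x' := isOpen_Ioo.mem_nhds hx'
    rw [← iDW_inter (s := Set.Icc a x) hu, ← iDW_inter (s := Set.Icc a b) hu,
      Set.inter_eq_self_of_subset_right Set.Ioo_subset_Icc_self,
      Set.inter_eq_self_of_subset_right (Set.Ioo_subset_Icc_self.trans hsub)]
  have hIco : Set.Icc a x ∩ Set.Iio x = Set.Icc a b ∩ Set.Iio x := by
    ext t
    simp only [Set.mem_inter_iff, Set.mem_Icc, Set.mem_Iio]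
    constructor
    · rintro ⟨⟨h1, h2⟩, h3⟩; exact ⟨⟨h1, h2.trans hx.2⟩, h3⟩
    · rintro ⟨⟨h1, _⟩, h3⟩; exact ⟨⟨h1, h3.le⟩, h3⟩
  have h2 : taylorWithinEval f m (Set.Icc a x) a x = taylorWithinEval f m (Set.Icc a b) a x := by
    rw [taylor_within_apply, taylor_within_apply]
    refine Finset.sum_congr rfl fun i _ => ?_
    have hu : Set.Iio x ∈ nhds a := Iio_mem_nhds hax
    rw [← iDW_inter (s := Set.Icc a x) hu, ← iDW_inter (s := Set.Icc a b) hu, hIco]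
  rw [← h2, hEq, h1]

theorem tpoly_eval (ψ : ℝ → ℝ) (a b : ℝ) (m : ℕ) (x : ℝ) :
    (∑ i ∈ Finset.range (m + 1),
        Polynomial.C (iteratedDerivWithin i ψ (Set.Icc a b) a / (i.factorial : ℝ)) *
          (Polynomial.X - Polynomial.C a) ^ i).eval x
      = taylorWithinEval ψ m (Set.Icc a b) a x := by
  rw [taylor_within_apply, Polynomial.eval_finset_sum]
  refine Finset.sum_congr rfl fun i _ => ?_
  simp [smul_eq_mul]
  ring

theorem tpoly_deg (ψ : ℝ → ℝ) (a b : ℝ) (m : ℕ) :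
    (∑ i ∈ Finset.range (m + 1),
        Polynomial.C (iteratedDerivWithin i ψ (Set.Icc a b) a / (i.factorial : ℝ)) *
          (Polynomial.X - Polynomial.C a) ^ i).natDegree ≤ m := by
  refine Polynomial.natDegree_sum_le_of_forall_le _ _ fun i hi => ?_
  refine (Polynomial.natDegree_C_mul_le _ _).trans ?_
  refine (Polynomial.natDegree_pow_le).trans ?_
  rw [Polynomial.natDegree_X_sub_C]
  simpa using Nat.lt_succ_iff.mp (Finset.mem_range.mp hi)

theorem poly_approx (M : ℝ) (hM : 0 < M) (k : ℕ) (s : ℝ) (hs : 1 < s) :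
    ∀ a b : ℝ, a < b → ∀ ψ : ℝ → ℝ,
      ContDiffOn ℝ (⌊s⌋₊) ψ (Set.Icc a b) →
      (∀ m ≤ ⌊s⌋₊, ∀ x ∈ Set.Icc a b, |iteratedDerivWithin m ψ (Set.Icc a b) x| ≤ M) →
      (∀ x ∈ Set.Icc a b, ∀ y ∈ Set.Icc a b,
        |iteratedDerivWithin ⌊s⌋₊ ψ (Set.Icc a b) x -
          iteratedDerivWithin ⌊s⌋₊ ψ (Set.Icc a b) y| ≤ M * |x - y| ^ (s - ⌊s⌋₊)) →
      ∃ q : Polynomial ℝ, q.natDegree ≤ 2 * k ∧ ∀ x ∈ Set.Icc a b,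
        |ψ x - q.eval x| ≤ M * (b - a) ^ (min s (2 * (k : ℝ) + 1)) := by
  intro a b hab ψ hsm hder hhol
  set n := ⌊s⌋₊ with hn
  have hδ : (0:ℝ) < b - a := sub_pos.mpr hab
  have hn1 : 1 ≤ n := Nat.le_floor (by exact_mod_cast hs.le)
  have hns : (n : ℝ) ≤ s := Nat.floor_le (by linarith)
  have hsn1 : s < n + 1 := Nat.lt_floor_add_one s
  have habs : ∀ x ∈ Set.Icc a b, |x - a| ≤ b - a := by
    intro x hx
    rw [abs_of_nonneg (sub_nonneg.mpr hx.1)]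
    linarith [hx.2]
  by_cases hcase : 2 * k + 1 ≤ n
  · -- high regularity: use Taylor of degree 2k with derivative bound
    set q : Polynomial ℝ := ∑ i ∈ Finset.range (2 * k + 1),
        Polynomial.C (iteratedDerivWithin i ψ (Set.Icc a b) a / (i.factorial : ℝ)) *
          (Polynomial.X - Polynomial.C a) ^ i with hq
    refine ⟨q, (tpoly_deg ψ a b (2*k)), fun x hx => ?_⟩
    obtain ⟨x', hx', hEq⟩ := taylor_lagrange_big hab hsm
      (lt_of_lt_of_le (Nat.lt_succ_self _) hcase) x hx
    have hmin : min s (2 * (k : ℝ) + 1) = 2 * (k : ℝ) + 1 := by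
      apply min_eq_right
      calc (2 * (k : ℝ) + 1) = ((2 * k + 1 : ℕ) : ℝ) := by push_cast; ring
        _ ≤ (n : ℝ) := by exact_mod_cast hcase
        _ ≤ s := hns
    rw [hmin, hq, tpoly_eval, hEq]
    have hfac : (1:ℝ) ≤ ((2*k+1).factorial : ℝ) := by
      exact_mod_cast Nat.one_le_iff_ne_zero.mpr (Nat.factorial_ne_zero _)
    have hb1 : |iteratedDerivWithin (2*k+1) ψ (Set.Icc a b) x'| ≤ M := hder _ hcase x' hx'
    have key : |iteratedDerivWithin (2*k+1) ψ (Set.Icc a b) x' * (x - a) ^ (2*k+1)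
        / ((2*k+1).factorial : ℝ)| ≤ M * (b - a) ^ (2*k+1) := by
      rw [abs_div, abs_mul, abs_pow, abs_of_nonneg (by positivity : (0:ℝ) ≤ ((2*k+1).factorial : ℝ))]
      calc |iteratedDerivWithin (2*k+1) ψ (Set.Icc a b) x'| * |x - a| ^ (2*k+1)
            / ((2*k+1).factorial : ℝ)
          ≤ M * (b - a) ^ (2*k+1) / 1 := by
            apply div_le_div₀ (by positivity)
              (mul_le_mul hb1 (pow_le_pow_left₀ (abs_nonneg _) (habs x hx) _)
                (by positivity) hM.le) one_pos hfac
        _ = M * (b - a) ^ (2*k+1) := by ring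
    refine key.trans (le_of_eq ?_)
    rw [show (2 * (k:ℝ) + 1) = ((2*k+1 : ℕ) : ℝ) by push_cast; ring, Real.rpow_natCast]
  · -- low regularity: Taylor degree n with Hölder remainder
    push_neg at hcase
    have hn2k : n ≤ 2 * k := Nat.lt_succ_iff.mp hcase
    have hmin : min s (2 * (k : ℝ) + 1) = s := by
      apply min_eq_left
      have : (n:ℝ) ≤ 2 * (k:ℝ) := by exact_mod_cast hn2k
      linarith
    obtain ⟨m, hmn⟩ : ∃ m, n = m + 1 := ⟨n - 1, by omega⟩
    set c : ℝ := iteratedDerivWithin n ψ (Set.Icc a b) a / (n.factorial : ℝ) with hc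
    set q : Polynomial ℝ := (∑ i ∈ Finset.range (m + 1),
        Polynomial.C (iteratedDerivWithin i ψ (Set.Icc a b) a / (i.factorial : ℝ)) *
          (Polynomial.X - Polynomial.C a) ^ i)
        + Polynomial.C c * (Polynomial.X - Polynomial.C a) ^ n with hq
    have hdeg : q.natDegree ≤ 2 * k := by
      refine (Polynomial.natDegree_add_le _ _).trans ?_
      refine max_le ((tpoly_deg ψ a b m).trans (by omega)) ?_
      have h3 : ((Polynomial.X - Polynomial.C a : Polynomial ℝ) ^ n).natDegree = n := by
        rw [Polynomial.natDegree_pow, Polynomial.natDegree_X_sub_C, mul_one]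
      exact (Polynomial.natDegree_C_mul_le c _).trans (le_of_eq h3 |>.trans (by omega))
    refine ⟨q, hdeg, fun x hx => ?_⟩
    obtain ⟨x', hx', hEq⟩ := taylor_lagrange_big (m := m) hab hsm (by omega) x hx
    have heval : q.eval x = taylorWithinEval ψ m (Set.Icc a b) a x + c * (x - a) ^ n := by
      rw [hq]; simp [tpoly_eval ψ a b m x]
    have hid : ψ x - q.eval x =
        (iteratedDerivWithin n ψ (Set.Icc a b) x' - iteratedDerivWithin n ψ (Set.Icc a b) a)
          * (x - a) ^ n / (n.factorial : ℝ) := by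
      have this : ψ x - taylorWithinEval ψ m (Set.Icc a b) a x =
          iteratedDerivWithin n ψ (Set.Icc a b) x' * (x - a) ^ n / (n.factorial : ℝ) := by
        rw [hmn]; exact hEq
      rw [heval, hc]
      linear_combination this
    rw [hmin, hid]
    have hfac : (1:ℝ) ≤ (n.factorial : ℝ) := by
      exact_mod_cast Nat.one_le_iff_ne_zero.mpr (Nat.factorial_ne_zero _)
    have hha : a ∈ Set.Icc a b := ⟨le_refl a, hab.le⟩
    have hhol' : |iteratedDerivWithin n ψ (Set.Icc a b) x' -
        iteratedDerivWithin n ψ (Set.Icc a b) a| ≤ M * (b - a) ^ (s - n) := by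
      refine (hhol x' hx' a hha).trans
        (mul_le_mul_of_nonneg_left
          (Real.rpow_le_rpow (abs_nonneg _) (habs x' hx') (sub_nonneg.mpr hns)) hM.le)
    rw [abs_div, abs_mul, abs_pow,
      abs_of_nonneg (by positivity : (0:ℝ) ≤ (n.factorial : ℝ))]
    calc |_| * |x - a| ^ n / (n.factorial : ℝ)
        ≤ (M * (b - a) ^ (s - n)) * (b - a) ^ n / 1 :=
          div_le_div₀ (by positivity)
            (mul_le_mul hhol' (pow_le_pow_left₀ (abs_nonneg _) (habs x hx) _)
              (by positivity) (by positivity)) one_pos hfac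
      _ = M * ((b - a) ^ (s - n) * (b - a) ^ ((n:ℝ))) := by
          rw [Real.rpow_natCast]; ring
      _ = M * (b - a) ^ s := by rw [← Real.rpow_add hδ]; ring_nf

noncomputable def Wmat (k : ℕ) : Matrix (Fin (2*k+1)) (Fin (2*k+1)) ℝ :=
  fun j i => (((j:ℝ) - k + 1/2) ^ (i.1+1) - ((j:ℝ) - k - 1/2) ^ (i.1+1)) / (i.1+1)

theorem int_eq (k : ℕ) (P : Polynomial ℝ) (hP : P.natDegree < 2*k+1) (j : Fin (2*k+1)) :
    ∫ t in ((j:ℝ) - k - 1/2)..((j:ℝ) - k + 1/2), P.eval t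
      = (Wmat k).mulVec (fun i => P.coeff i) j := by
  have hev : ∀ t : ℝ, P.eval t = ∑ i ∈ Finset.range (2*k+1), P.coeff i * t ^ i := fun t =>
    Polynomial.eval_eq_sum_range' hP t
  simp_rw [hev]
  rw [intervalIntegral.integral_finset_sum (f := fun i t => P.coeff i * t ^ i)
    (fun i _ => ((continuous_const.mul (continuous_pow i)).intervalIntegrable _ _))]
  rw [Matrix.mulVec, dotProduct, ← Fin.sum_univ_eq_sum_range
    (fun i => ∫ t in ((j:ℝ) - k - 1/2)..((j:ℝ) - k + 1/2), P.coeff i * t ^ i)]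
  refine Finset.sum_congr rfl fun i _ => ?_
  rw [intervalIntegral.integral_const_mul, integral_pow, Wmat]
  ring

theorem W_inj (k : ℕ) : Function.Injective ((Wmat k).mulVecLin) := by
  rw [← LinearMap.ker_eq_bot, LinearMap.ker_eq_bot']
  intro c hc
  rw [Matrix.mulVecLin_apply] at hc
  set Q : Polynomial ℝ := ∑ i : Fin (2*k+1), Polynomial.C (c i / (i.1+1)) * Polynomial.X^(i.1+1)
    with hQ
  have hQdeg : Q.natDegree ≤ 2*k+1 := by
    refine Polynomial.natDegree_sum_le_of_forall_le _ _ fun i _ => ?_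
    refine (Polynomial.natDegree_C_mul_le _ _).trans ?_
    rw [Polynomial.natDegree_X_pow]
    omega
  have hQdiff : ∀ j : Fin (2*k+1), Q.eval ((j:ℝ) - k + 1/2) - Q.eval ((j:ℝ) - k - 1/2)
      = (Wmat k).mulVec c j := by
    intro j
    rw [hQ]
    simp only [Polynomial.eval_finset_sum, Polynomial.eval_mul, Polynomial.eval_C,
      Polynomial.eval_pow, Polynomial.eval_X, Matrix.mulVec, dotProduct]
    rw [← Finset.sum_sub_distrib]
    refine Finset.sum_congr rfl fun i _ => ?_
    rw [Wmat]
    have : ((i.1:ℝ)+1) ≠ 0 := by positivity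
    field_simp
  have hzero : ∀ j : Fin (2*k+1), Q.eval ((j:ℝ) - k + 1/2) = Q.eval ((j:ℝ) - k - 1/2) := by
    intro j
    have := hQdiff j
    rw [hc] at this
    simpa [sub_eq_zero] using this
  set v : ℝ := Q.eval (-(k:ℝ) - 1/2) with hv
  have hval : ∀ m : ℕ, m ≤ 2*k+1 → Q.eval ((m:ℝ) - k - 1/2) = v := by
    intro m
    induction m with
    | zero => intro _; norm_num [hv]
    | succ m ih =>
      intro hm
      have hmN : m < 2*k+1 := by omega
      have h1 := hzero ⟨m, hmN⟩
      have h2 : ((m:ℝ) + 1) - k - 1/2 = (m:ℝ) - k + 1/2 := by ring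
      push_cast
      rw [h2]
      simp only [Fin.val_mk] at h1 ⊢
      rw [h1]
      exact ih (by omega)
  have hRzero : Q - Polynomial.C v = 0 := by
    have hfinj : Function.Injective (fun j : Fin (2*k+1+1) => (j:ℝ) - k - 1/2) := by
      intro a b hab
      simp only at hab
      have : (a.1:ℝ) = b.1 := by linarith
      exact Fin.ext (by exact_mod_cast this)
    refine Polynomial.eq_zero_of_natDegree_lt_card_of_eval_eq_zero _ hfinj
      (fun j => ?_) ?_
    · simp only [Polynomial.eval_sub, Polynomial.eval_C]
      rw [hval j.1 (by omega)]
      ring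
    · rw [Fintype.card_fin]
      refine lt_of_le_of_lt (Polynomial.natDegree_sub_le _ _) ?_
      rw [Polynomial.natDegree_C]
      omega
  have hQeq : Q = Polynomial.C v := by
    have := hRzero
    rwa [sub_eq_zero] at this
  funext i
  have hcoeff : Q.coeff (i.1+1) = c i / (i.1+1) := by
    rw [hQ, Polynomial.finset_sum_coeff]
    have hterm : ∀ i' : Fin (2*k+1),
        (Polynomial.C (c i' / (i'.1+1)) * Polynomial.X^(i'.1+1)).coeff (i.1+1)
          = if i' = i then c i / (i.1+1) else 0 := by
      intro i'
      rw [Polynomial.coeff_C_mul, Polynomial.coeff_X_pow]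
      by_cases h : i' = i
      · subst h; simp
      · have : ¬ (i.1+1 = i'.1+1) := by
          intro hcon
          exact h (Fin.ext (by omega))
        simp [this, h, Fin.val_inj, Ne.symm h]
    rw [Finset.sum_congr rfl fun i' _ => hterm i']
    simp
  rw [hQeq] at hcoeff
  have h0 : (0:ℝ) = c i / (i.1+1) := by
    rw [← hcoeff, Polynomial.coeff_C]
    simp
  have : ((i.1:ℝ)+1) ≠ 0 := by positivity
  have hz := h0.symm
  field_simp at hz
  simp [hz]

theorem ref_stab (k : ℕ) : ∃ Λ > (0:ℝ), ∀ P : Polynomial ℝ, P.natDegree ≤ 2*k → ∀ E : ℝ, 0 ≤ E →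
    (∀ j : Fin (2*k+1), |∫ t in ((j:ℝ) - k - 1/2)..((j:ℝ) - k + 1/2), P.eval t| ≤ E) →
    ∀ t ∈ Set.Icc (-(1/2):ℝ) (1/2), |P.eval t| ≤ Λ * E := by
  have hinj := W_inj k
  have hsurj : Function.Surjective ((Wmat k).mulVecLin) :=
    (LinearMap.injective_iff_surjective).mp hinj
  let e : (Fin (2*k+1) → ℝ) ≃ₗ[ℝ] (Fin (2*k+1) → ℝ) :=
    LinearEquiv.ofBijective _ ⟨hinj, hsurj⟩
  let ee : (Fin (2*k+1) → ℝ) ≃L[ℝ] (Fin (2*k+1) → ℝ) := e.toContinuousLinearEquiv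
  set κ : ℝ := ‖(ee.symm : (Fin (2*k+1) → ℝ) →L[ℝ] (Fin (2*k+1) → ℝ))‖ with hκ
  have hκ0 : 0 ≤ κ := norm_nonneg _
  refine ⟨(2*k+1) * (κ + 1), by positivity, ?_⟩
  intro P hdeg E hE hint t ht
  set c : Fin (2*k+1) → ℝ := fun i => P.coeff i with hcdef
  have hnormAc : ‖(Wmat k).mulVecLin c‖ ≤ E := by
    rw [pi_norm_le_iff_of_nonneg hE]
    intro j
    rw [Matrix.mulVecLin_apply]
    rw [← int_eq k P (by omega) j]
    exact hint j
  have hnormc : ‖c‖ ≤ κ * E := by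
    have h1 : c = ee.symm ((Wmat k).mulVecLin c) := by
      have : ee c = (Wmat k).mulVecLin c := rfl
      rw [← this, ContinuousLinearEquiv.symm_apply_apply]
    calc ‖c‖ = ‖ee.symm ((Wmat k).mulVecLin c)‖ := by rw [← h1]
      _ ≤ κ * ‖(Wmat k).mulVecLin c‖ :=
        (ee.symm : (Fin (2*k+1) → ℝ) →L[ℝ] (Fin (2*k+1) → ℝ)).le_opNorm _
      _ ≤ κ * E := by exact mul_le_mul_of_nonneg_left hnormAc hκ0
  have hcoeff : ∀ i : Fin (2*k+1), |P.coeff i.1| ≤ κ * E := fun i =>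
    (norm_le_pi_norm c i).trans hnormc
  have habs : |t| ≤ 1 := by
    rw [abs_le]; constructor <;> [linarith [ht.1]; linarith [ht.2]]
  calc |P.eval t| = |∑ i ∈ Finset.range (2*k+1), P.coeff i * t ^ i| := by
        rw [Polynomial.eval_eq_sum_range' (by omega : P.natDegree < 2*k+1)]
    _ ≤ ∑ i ∈ Finset.range (2*k+1), |P.coeff i * t ^ i| := Finset.abs_sum_le_sum_abs _ _
    _ ≤ ∑ i ∈ Finset.range (2*k+1), κ * E := by
        refine Finset.sum_le_sum fun i hi => ?_
        rw [abs_mul, abs_pow]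
        have h1 : |P.coeff i| ≤ κ * E := hcoeff ⟨i, Finset.mem_range.mp hi⟩
        have h2 : |t| ^ i ≤ 1 := pow_le_one₀ (abs_nonneg t) habs
        calc |P.coeff i| * |t| ^ i ≤ (κ * E) * 1 :=
              mul_le_mul h1 h2 (by positivity) (by positivity)
          _ = κ * E := mul_one _
    _ = (2*k+1) * (κ * E) := by rw [Finset.sum_const, Finset.card_range]; push_cast; ring
    _ ≤ (2*k+1) * (κ + 1) * E := by nlinarith [mul_nonneg hκ0 hE]

theorem vol_strip (f : ℝ → ℝ) (hf : Continuous f) (α β ε : ℝ) :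
    volume {z : ℝ × ℝ | z.1 ∈ Set.Icc α β ∧ z.2 ∈ Set.Icc (f z.1 - ε) (f z.1 + ε)}
      ≤ ENNReal.ofReal (β - α) * ENNReal.ofReal (2 * ε) := by
  set S := {z : ℝ × ℝ | z.1 ∈ Set.Icc α β ∧ z.2 ∈ Set.Icc (f z.1 - ε) (f z.1 + ε)} with hS
  have hmeas : MeasurableSet S := by
    have h1 : S = (Set.Icc α β ×ˢ (Set.univ : Set ℝ)) ∩
        ({z : ℝ × ℝ | f z.1 - ε ≤ z.2} ∩ {z : ℝ × ℝ | z.2 ≤ f z.1 + ε}) := by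
      ext z; simp [hS, Set.mem_Icc, and_assoc]
    rw [h1]
    exact (measurableSet_Icc.prod MeasurableSet.univ).inter
      ((measurableSet_le ((hf.comp continuous_fst).sub continuous_const).measurable
          measurable_snd).inter
        (measurableSet_le measurable_snd
          ((hf.comp continuous_fst).add continuous_const).measurable))
  rw [MeasureTheory.Measure.volume_eq_prod, MeasureTheory.Measure.prod_apply hmeas]
  have : ∀ x : ℝ, volume (Prod.mk x ⁻¹' S) =
      Set.indicator (Set.Icc α β) (fun _ => ENNReal.ofReal (2 * ε)) x := by
    intro x
    by_cases hx : x ∈ Set.Icc α β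
    · have : Prod.mk x ⁻¹' S = Set.Icc (f x - ε) (f x + ε) := by
        ext y
        simp only [hS, Set.mem_preimage, Set.mem_setOf_eq]
        exact ⟨fun hh => hh.2, fun hy => ⟨hx, hy⟩⟩
      rw [this, Set.indicator_of_mem hx, Real.volume_Icc]
      congr 1; ring
    · have : Prod.mk x ⁻¹' S = ∅ := by
        ext y
        simp only [hS, Set.mem_preimage, Set.mem_setOf_eq, Set.mem_empty_iff_false, iff_false]
        exact fun hcon => hx hcon.1
      rw [this, Set.indicator_of_notMem hx, measure_empty]
  rw [lintegral_congr this, lintegral_indicator measurableSet_Icc,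
    setLIntegral_const, Real.volume_Icc]
  exact le_of_eq (mul_comm _ _)

end AEROS

open Set Polynomial in
/-- Local `L¹` error of the AEROS recovery: if near a cell `T` of side `h` the domain `Ω` is the
subgraph `{y ≤ ψ(x)}` of a `C^s` function `ψ` (`s > 1`, `C^s` norm `≤ M`) on
`[x_T − C₀h, x_T + C₀h]`, and `p` is the degree-`2k` average interpolant of `ψ` on the
`2k+1` columns of width `h` centered at `x_T`, then
`‖χ_Ω − χ_{{y ≤ p(x)}}‖_{L¹(T)} ≤ C h^{r+1}` with `r = min{s, 2k+1}` and `C` depending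
only on `M`, `k` (and `s`, `C₀`). -/
theorem stmt12 (M : ℝ) (hM : 0 < M) (k : ℕ) (s : ℝ) (hs : 1 < s)
    (C0 : ℝ) (hC0 : (k : ℝ) + 1 / 2 ≤ C0) :
    ∃ C > (0 : ℝ), ∀ h : ℝ, 0 < h → ∀ xT yT : ℝ, ∀ ψ : ℝ → ℝ,
      ContDiffOn ℝ (⌊s⌋₊) ψ (Set.Icc (xT - C0 * h) (xT + C0 * h)) →
      (∀ m ≤ ⌊s⌋₊, ∀ x ∈ Set.Icc (xT - C0 * h) (xT + C0 * h),
        |iteratedDerivWithin m ψ (Set.Icc (xT - C0 * h) (xT + C0 * h)) x| ≤ M) →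
      (∀ x ∈ Set.Icc (xT - C0 * h) (xT + C0 * h), ∀ y ∈ Set.Icc (xT - C0 * h) (xT + C0 * h),
        |iteratedDerivWithin ⌊s⌋₊ ψ (Set.Icc (xT - C0 * h) (xT + C0 * h)) x -
          iteratedDerivWithin ⌊s⌋₊ ψ (Set.Icc (xT - C0 * h) (xT + C0 * h)) y| ≤
            M * |x - y| ^ (s - ⌊s⌋₊)) →
      ∀ p : Polynomial ℝ, p.natDegree ≤ 2 * k →
      (∀ j : Fin (2 * k + 1),
        ∫ x in (xT + ((j.1 : ℝ) - k) * h - h / 2)..(xT + ((j.1 : ℝ) - k) * h + h / 2), p.eval x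
          = ∫ x in (xT + ((j.1 : ℝ) - k) * h - h / 2)..(xT + ((j.1 : ℝ) - k) * h + h / 2), ψ x) →
      volume (symmDiff {z : ℝ × ℝ | z.2 ≤ ψ z.1} {z : ℝ × ℝ | z.2 ≤ p.eval z.1}
          ∩ (Set.Icc (xT - h / 2) (xT + h / 2) ×ˢ Set.Icc (yT - h / 2) (yT + h / 2)))
        ≤ ENNReal.ofReal (C * h ^ (min s (2 * (k : ℝ) + 1) + 1)) := by
  obtain ⟨Λ, hΛ, hstab⟩ := ref_stab k
  have hC0pos : (0:ℝ) < C0 := lt_of_lt_of_le (by positivity) hC0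
  set r : ℝ := min s (2 * (k : ℝ) + 1) with hrdef
  have hD0 : (0:ℝ) < (2*C0) ^ r := Real.rpow_pos_of_pos (by linarith) r
  refine ⟨2 * (1 + Λ) * (M * (2*C0) ^ r), by positivity, ?_⟩
  intro h hh xT yT ψ hsm hder hhol p hpdeg hpint
  set a : ℝ := xT - C0 * h with hadef
  set b : ℝ := xT + C0 * h with hbdef
  have hab : a < b := by rw [hadef, hbdef]; nlinarith
  obtain ⟨q, hqdeg, hqapprox⟩ := poly_approx M hM k s hs a b hab ψ hsm hder hhol
  have hba : b - a = 2*C0*h := by rw [hadef, hbdef]; ring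
  set E : ℝ := M * (2*C0*h) ^ r with hEdef
  have hEpos : 0 < E := by
    rw [hEdef]
    exact mul_pos hM (Real.rpow_pos_of_pos (by nlinarith) r)
  have hqapprox' : ∀ x ∈ Set.Icc a b, |ψ x - q.eval x| ≤ E := by
    intro x hx; have := hqapprox x hx; rwa [hba] at this
  -- the rescaled polynomial
  set P : Polynomial ℝ := (p - q).comp (Polynomial.C xT + Polynomial.C h * Polynomial.X)
    with hPdef
  have hPdeg : P.natDegree ≤ 2*k := by
    rw [hPdef, Polynomial.natDegree_comp, Polynomial.natDegree_C_add,
      Polynomial.natDegree_C_mul_X h (ne_of_gt hh), mul_one]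
    exact (Polynomial.natDegree_sub_le p q).trans (max_le hpdeg hqdeg)
  have hPeval : ∀ t : ℝ, P.eval t = (p - q).eval (xT + h * t) := by
    intro t
    rw [hPdef, Polynomial.eval_comp]
    simp
  -- integral bounds on reference cells
  have hint : ∀ j : Fin (2*k+1), |∫ t in ((j:ℝ) - k - 1/2)..((j:ℝ) - k + 1/2), P.eval t| ≤ E := by
    intro j
    have hj0 : (0:ℝ) ≤ (j:ℝ) := Nat.cast_nonneg _
    have hj1 : (j:ℝ) ≤ 2*k := by
      have : (j:ℕ) < 2*k+1 := j.2
      exact_mod_cast Nat.lt_succ_iff.mp this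
    set l : ℝ := xT + ((j:ℝ) - k) * h - h/2 with hldef
    set u : ℝ := xT + ((j:ℝ) - k) * h + h/2 with hudef
    have hlu : l ≤ u := by rw [hldef, hudef]; linarith
    have hcell : Set.uIcc l u ⊆ Set.Icc a b := by
      rw [Set.uIcc_of_le hlu]
      apply Set.Icc_subset_Icc
      · rw [hadef, hldef]; nlinarith
      · rw [hbdef, hudef]; nlinarith
    have hcomp : ∫ t in ((j:ℝ) - k - 1/2)..((j:ℝ) - k + 1/2), P.eval t
        = h⁻¹ * ∫ x in l..u, (p - q).eval x := by
      have h0 : (fun t => P.eval t) = fun t => (p - q).eval (xT + h * t) := funext hPeval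
      have hsubst : (∫ t in ((j:ℝ) - k - 1/2)..((j:ℝ) - k + 1/2), (p - q).eval (xT + h * t))
          = h⁻¹ • ∫ x in (xT + h * ((j:ℝ) - k - 1/2))..(xT + h * ((j:ℝ) - k + 1/2)),
              (p - q).eval x :=
        intervalIntegral.integral_comp_add_mul (fun y => (p - q).eval y) (ne_of_gt hh) xT
      rw [h0, hsubst, smul_eq_mul]
      congr 2
      · rw [hldef]; ring
      · rw [hudef]; ring
    have hiq : IntervalIntegrable (fun x => q.eval x) volume l u :=
      (q.continuous).intervalIntegrable l u
    have hip : IntervalIntegrable (fun x => p.eval x) volume l u :=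
      (p.continuous).intervalIntegrable l u
    have hiψ : IntervalIntegrable ψ volume l u :=
      (hsm.continuousOn.mono hcell).intervalIntegrable
    have hsplit : ∫ x in l..u, (p - q).eval x = (∫ x in l..u, ψ x) - ∫ x in l..u, q.eval x := by
      simp_rw [Polynomial.eval_sub]
      rw [intervalIntegral.integral_sub hip hiq]
      congr 1
      have := hpint j
      rw [hldef, hudef]
      exact this
    have hdiff : (∫ x in l..u, ψ x) - (∫ x in l..u, q.eval x)
        = ∫ x in l..u, (ψ x - q.eval x) := (intervalIntegral.integral_sub hiψ hiq).symm
    have hbound : |∫ x in l..u, (ψ x - q.eval x)| ≤ E * |u - l| := by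
      rw [← Real.norm_eq_abs]
      apply intervalIntegral.norm_integral_le_of_norm_le_const
      intro x hx
      have hx' : x ∈ Set.Icc a b := hcell (Set.uIoc_subset_uIcc hx)
      exact hqapprox' x hx'
    have hul : |u - l| = h := by rw [hudef, hldef]; rw [abs_of_nonneg (by linarith)]; ring
    rw [hcomp, abs_mul, abs_inv, abs_of_pos hh, hsplit, hdiff]
    calc h⁻¹ * |∫ x in l..u, (ψ x - q.eval x)| ≤ h⁻¹ * (E * h) := by
          rw [← hul]
          exact mul_le_mul_of_nonneg_left hbound (by positivity)
      _ = E := by field_simp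
  -- sup bound on the cell
  have hclose : ∀ x ∈ Set.Icc (xT - h/2) (xT + h/2), |ψ x - p.eval x| ≤ (1 + Λ) * E := by
    intro x hx
    have ht : (x - xT)/h ∈ Set.Icc (-(1/2):ℝ) (1/2) := by
      constructor
      · rw [le_div_iff₀ hh]; linarith [hx.1]
      · rw [div_le_iff₀ hh]; linarith [hx.2]
    have hPt := hstab P hPdeg E hEpos.le hint _ ht
    have hPx : P.eval ((x - xT)/h) = p.eval x - q.eval x := by
      rw [hPeval]
      have : xT + h * ((x - xT)/h) = x := by field_simp; ring
      rw [this, Polynomial.eval_sub]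
    have hx' : x ∈ Set.Icc a b := by
      refine Set.Icc_subset_Icc ?_ ?_ hx
      · rw [hadef]; nlinarith
      · rw [hbdef]; nlinarith
    have h1 := hqapprox' x hx'
    rw [hPx] at hPt
    calc |ψ x - p.eval x| = |(ψ x - q.eval x) - (p.eval x - q.eval x)| := by ring_nf
      _ ≤ |ψ x - q.eval x| + |p.eval x - q.eval x| := abs_sub _ _
      _ ≤ E + Λ * E := add_le_add h1 hPt
      _ = (1 + Λ) * E := by ring
  -- geometry
  set ε : ℝ := (1 + Λ) * E with hεdef
  have hεpos : 0 < ε := by positivity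
  have hinc : symmDiff {z : ℝ × ℝ | z.2 ≤ ψ z.1} {z : ℝ × ℝ | z.2 ≤ p.eval z.1}
      ∩ (Set.Icc (xT - h / 2) (xT + h / 2) ×ˢ Set.Icc (yT - h / 2) (yT + h / 2))
      ⊆ {z : ℝ × ℝ | z.1 ∈ Set.Icc (xT - h/2) (xT + h/2) ∧
          z.2 ∈ Set.Icc (p.eval z.1 - ε) (p.eval z.1 + ε)} := by
    rintro ⟨x, y⟩ ⟨hsd, hcell⟩
    have hx : x ∈ Set.Icc (xT - h/2) (xT + h/2) := hcell.1
    have hd := abs_le.mp (hclose x hx)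
    refine ⟨hx, ?_⟩
    rw [Set.mem_symmDiff] at hsd
    rcases hsd with ⟨h1, h2⟩ | ⟨h1, h2⟩
    · simp only [Set.mem_setOf_eq] at h1 h2
      push_neg at h2
      exact ⟨by linarith, by linarith [hd.2]⟩
    · simp only [Set.mem_setOf_eq] at h1 h2
      push_neg at h2
      exact ⟨by linarith [hd.1], by linarith⟩
  refine (measure_mono hinc).trans ?_
  refine (vol_strip (fun x => p.eval x) p.continuous _ _ _).trans ?_
  have hw : (xT + h/2) - (xT - h/2) = h := by ring
  rw [hw, ← ENNReal.ofReal_mul hh.le]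
  apply ENNReal.ofReal_le_ofReal
  have hsplit : (2*C0*h) ^ r = (2*C0) ^ r * h ^ r :=
    Real.mul_rpow (by linarith) hh.le
  have hpow : h ^ (r + 1) = h ^ r * h := Real.rpow_add_one (ne_of_gt hh) r
  rw [hεdef, hEdef, hsplit, hpow]
  ring_nf
  exact le_refl _
end
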